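/- Let n ≥ 3 and 0 < m ≤ M < ∞ with m < M, and define f(λ) = λM/(λM + (n−1−λ)m) − (λ−1)m/((λ−1)m + (n−λ)M) for real λ ∈ [1, n−1]. Then f is twice differentiable on (1, n−1) with f''(λ) ≤ 0 there (f is concave on [1, n−1]), and f attains its maximum over [1, n−1] at λ = n/2, where f(n/2) = (nM − (n−2)m)/(nM + (n−2)m). -/

import Mathlib

set_option linter.all false

private lemma stmt_10_aux1 (N m M y : ℝ)
    (h1 : y * M + (N - 1 - y) * m ≠ 0) (h2 : (y - 1) * m + (N - y) * M ≠ 0) :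
    HasDerivAt (fun l : ℝ => l * M / (l * M + (N - 1 - l) * m)
        - (l - 1) * m / ((l - 1) * m + (N - l) * M))
      ((N - 1) * m * M / (y * M + (N - 1 - y) * m) ^ 2
        - (N - 1) * m * M / ((y - 1) * m + (N - y) * M) ^ 2) y := by
  have hu1 : HasDerivAt (fun l : ℝ => l * M) M y := by
    simpa using (hasDerivAt_id y).mul_const M
  have hd1 : HasDerivAt (fun l : ℝ => l * M + (N - 1 - l) * m) (M - m) y := by
    have := hu1.add (((hasDerivAt_const y (N - 1)).sub (hasDerivAt_id y)).mul_const m)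
    exact this.congr_deriv (by ring)
  have hu2 : HasDerivAt (fun l : ℝ => (l - 1) * m) m y := by
    simpa using ((hasDerivAt_id y).sub_const 1).mul_const m
  have hd2 : HasDerivAt (fun l : ℝ => (l - 1) * m + (N - l) * M) (m - M) y := by
    have := hu2.add (((hasDerivAt_const y N).sub (hasDerivAt_id y)).mul_const M)
    exact this.congr_deriv (by ring)
  have h := (hu1.div hd1 h1).sub (hu2.div hd2 h2)
  have e1 : M * (y * M + (N - 1 - y) * m) - y * M * (M - m) = (N - 1) * m * M := by ring
  have e2 : m * ((y - 1) * m + (N - y) * M) - (y - 1) * m * (m - M) = (N - 1) * m * M := by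
    ring
  rw [e1, e2] at h
  exact h

private lemma stmt_10_aux2 (N m M y : ℝ)
    (h1 : y * M + (N - 1 - y) * m ≠ 0) (h2 : (y - 1) * m + (N - y) * M ≠ 0) :
    HasDerivAt (fun l : ℝ => (N - 1) * m * M / (l * M + (N - 1 - l) * m) ^ 2
        - (N - 1) * m * M / ((l - 1) * m + (N - l) * M) ^ 2)
      (-(2 * ((N - 1) * m * M) * (M - m)) / (y * M + (N - 1 - y) * m) ^ 3
        - 2 * ((N - 1) * m * M) * (M - m) / ((y - 1) * m + (N - y) * M) ^ 3) y := by
  have hd1 : HasDerivAt (fun l : ℝ => l * M + (N - 1 - l) * m) (M - m) y := by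
    have := ((hasDerivAt_id y).mul_const M).add
      (((hasDerivAt_const y (N - 1)).sub (hasDerivAt_id y)).mul_const m)
    exact this.congr_deriv (by ring)
  have hd2 : HasDerivAt (fun l : ℝ => (l - 1) * m + (N - l) * M) (m - M) y := by
    have := (((hasDerivAt_id y).sub_const 1).mul_const m).add
      (((hasDerivAt_const y N).sub (hasDerivAt_id y)).mul_const M)
    exact this.congr_deriv (by ring)
  have hp1 := hd1.pow 2
  have hp2 := hd2.pow 2
  have hq1 := (hasDerivAt_const y ((N - 1) * m * M)).div hp1 (pow_ne_zero 2 h1)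
  have hq2 := (hasDerivAt_const y ((N - 1) * m * M)).div hp2 (pow_ne_zero 2 h2)
  have h := hq1.sub hq2
  refine h.congr_deriv ?_
  simp only [Pi.pow_apply]
  push_cast
  field_simp
  ring

private lemma stmt_10_value (N m M : ℝ)
    (hD : N / 2 * M + (N - 1 - N / 2) * m ≠ 0)
    (hD' : (N / 2 - 1) * m + (N - N / 2) * M ≠ 0)
    (hDen : N * M + (N - 2) * m ≠ 0) :
    N / 2 * M / (N / 2 * M + (N - 1 - N / 2) * m)
      - (N / 2 - 1) * m / ((N / 2 - 1) * m + (N - N / 2) * M)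
      = (N * M - (N - 2) * m) / (N * M + (N - 2) * m) := by
  rw [div_sub_div _ _ hD hD', div_eq_div_iff (mul_ne_zero hD hD') hDen]
  ring

set_option maxHeartbeats 800000 in
theorem stmt_10 {n : ℕ} (hn : 3 ≤ n) (m M : ℝ) (hm : 0 < m) (hmM : m < M)
    (f : ℝ → ℝ)
    (hf : ∀ l : ℝ, f l = l * M / (l * M + ((n : ℝ) - 1 - l) * m)
      - (l - 1) * m / ((l - 1) * m + ((n : ℝ) - l) * M)) :
    (∀ x ∈ Set.Ioo (1 : ℝ) ((n : ℝ) - 1),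
        ContDiffAt ℝ 2 f x ∧ deriv (deriv f) x ≤ 0) ∧
    ConcaveOn ℝ (Set.Icc (1 : ℝ) ((n : ℝ) - 1)) f ∧
    IsMaxOn f (Set.Icc (1 : ℝ) ((n : ℝ) - 1)) ((n : ℝ) / 2) ∧
    f ((n : ℝ) / 2) = ((n : ℝ) * M - ((n : ℝ) - 2) * m) / ((n : ℝ) * M + ((n : ℝ) - 2) * m) := by
  have hM : 0 < M := lt_trans hm hmM
  have hN : (3 : ℝ) ≤ (n : ℝ) := by exact_mod_cast hn
  set N : ℝ := (n : ℝ) with hNdef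
  have hfe : f = fun l : ℝ => l * M / (l * M + (N - 1 - l) * m)
      - (l - 1) * m / ((l - 1) * m + (N - l) * M) := funext hf
  subst hfe
  have hD1pos : ∀ l ∈ Set.Icc (1 : ℝ) (N - 1), 0 < l * M + (N - 1 - l) * m := by
    intro l hl
    obtain ⟨h1, h2⟩ := hl
    have : 0 ≤ (N - 1 - l) * m := mul_nonneg (by linarith) hm.le
    have : 0 < l * M := mul_pos (by linarith) hM
    linarith
  have hD2pos : ∀ l ∈ Set.Icc (1 : ℝ) (N - 1), 0 < (l - 1) * m + (N - l) * M := by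
    intro l hl
    obtain ⟨h1, h2⟩ := hl
    have : 0 ≤ (l - 1) * m := mul_nonneg (by linarith) hm.le
    have : 0 < (N - l) * M := mul_pos (by linarith) hM
    linarith
  have hc : 0 < (N - 1) * m * M := mul_pos (mul_pos (by linarith) hm) hM
  have hder : ∀ y ∈ Set.Icc (1 : ℝ) (N - 1),
      HasDerivAt (fun l : ℝ => l * M / (l * M + (N - 1 - l) * m)
          - (l - 1) * m / ((l - 1) * m + (N - l) * M))
        ((N - 1) * m * M / (y * M + (N - 1 - y) * m) ^ 2
          - (N - 1) * m * M / ((y - 1) * m + (N - y) * M) ^ 2) y :=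
    fun y hy => stmt_10_aux1 N m M y (hD1pos y hy).ne' (hD2pos y hy).ne'
  have hφder : ∀ y ∈ Set.Icc (1 : ℝ) (N - 1),
      HasDerivAt (fun l : ℝ => (N - 1) * m * M / (l * M + (N - 1 - l) * m) ^ 2
          - (N - 1) * m * M / ((l - 1) * m + (N - l) * M) ^ 2)
        (-(2 * ((N - 1) * m * M) * (M - m)) / (y * M + (N - 1 - y) * m) ^ 3
          - 2 * ((N - 1) * m * M) * (M - m) / ((y - 1) * m + (N - y) * M) ^ 3) y :=
    fun y hy => stmt_10_aux2 N m M y (hD1pos y hy).ne' (hD2pos y hy).ne'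
  have hψnonpos : ∀ y ∈ Set.Icc (1 : ℝ) (N - 1),
      -(2 * ((N - 1) * m * M) * (M - m)) / (y * M + (N - 1 - y) * m) ^ 3
        - 2 * ((N - 1) * m * M) * (M - m) / ((y - 1) * m + (N - y) * M) ^ 3 ≤ 0 := by
    intro y hy
    have h1 := hD1pos y hy
    have h2 := hD2pos y hy
    have hk : 0 < 2 * ((N - 1) * m * M) * (M - m) :=
      mul_pos (mul_pos two_pos hc) (sub_pos.mpr hmM)
    have t1 : (0:ℝ) < 2 * ((N - 1) * m * M) * (M - m) / (y * M + (N - 1 - y) * m) ^ 3 :=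
      div_pos hk (pow_pos h1 3)
    have t2 : (0:ℝ) < 2 * ((N - 1) * m * M) * (M - m) / ((y - 1) * m + (N - y) * M) ^ 3 :=
      div_pos hk (pow_pos h2 3)
    rw [neg_div]
    linarith
  have hcont : ContinuousOn (fun l : ℝ => l * M / (l * M + (N - 1 - l) * m)
      - (l - 1) * m / ((l - 1) * m + (N - l) * M)) (Set.Icc (1 : ℝ) (N - 1)) := by
    apply ContinuousOn.sub
    · exact ((continuous_id.mul continuous_const).continuousOn).div
        (by fun_prop) (fun l hl => (hD1pos l hl).ne')
    · exact (((continuous_id.sub continuous_const).mul continuous_const).continuousOn).div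
        (by fun_prop) (fun l hl => (hD2pos l hl).ne')
  have hIccsub : Set.Ioo (1 : ℝ) (N - 1) ⊆ Set.Icc (1 : ℝ) (N - 1) := Set.Ioo_subset_Icc_self
  have hevφ : ∀ x ∈ Set.Ioo (1 : ℝ) (N - 1),
      deriv (fun l : ℝ => l * M / (l * M + (N - 1 - l) * m)
          - (l - 1) * m / ((l - 1) * m + (N - l) * M))
      =ᶠ[nhds x] (fun y : ℝ => (N - 1) * m * M / (y * M + (N - 1 - y) * m) ^ 2
          - (N - 1) * m * M / ((y - 1) * m + (N - y) * M) ^ 2) := by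
    intro x hx
    filter_upwards [isOpen_Ioo.mem_nhds hx] with y hy
    exact (hder y (hIccsub hy)).deriv
  have hderiv2 : ∀ x ∈ Set.Ioo (1 : ℝ) (N - 1),
      deriv (deriv (fun l : ℝ => l * M / (l * M + (N - 1 - l) * m)
          - (l - 1) * m / ((l - 1) * m + (N - l) * M))) x
        = -(2 * ((N - 1) * m * M) * (M - m)) / (x * M + (N - 1 - x) * m) ^ 3
          - 2 * ((N - 1) * m * M) * (M - m) / ((x - 1) * m + (N - x) * M) ^ 3 := by
    intro x hx
    rw [(hevφ x hx).deriv_eq]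
    exact (hφder x (hIccsub hx)).deriv
  refine ⟨?_, ?_, ?_, ?_⟩
  · intro x hx
    constructor
    · have h1 := hD1pos x (hIccsub hx)
      have h2 := hD2pos x (hIccsub hx)
      apply ContDiffAt.sub
      · exact ((contDiffAt_id.mul contDiffAt_const).div (by fun_prop) h1.ne')
      · exact (((contDiffAt_id.sub contDiffAt_const).mul contDiffAt_const).div
          (by fun_prop) h2.ne')
    · rw [hderiv2 x hx]
      exact hψnonpos x (hIccsub hx)
  · apply concaveOn_of_deriv2_nonpos (convex_Icc _ _) hcont
    · rw [interior_Icc]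
      intro x hx
      exact ((hder x (hIccsub hx)).differentiableAt).differentiableWithinAt
    · rw [interior_Icc]
      intro x hx
      have hd : DifferentiableAt ℝ
          (fun y : ℝ => (N - 1) * m * M / (y * M + (N - 1 - y) * m) ^ 2
            - (N - 1) * m * M / ((y - 1) * m + (N - y) * M) ^ 2) x :=
        (hφder x (hIccsub hx)).differentiableAt
      exact (hd.congr_of_eventuallyEq (hevφ x hx)).differentiableWithinAt
    · rw [interior_Icc]
      intro x hx
      show deriv (deriv _) x ≤ 0
      rw [hderiv2 x hx]
      exact hψnonpos x (hIccsub hx)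
  · have hhalf1 : (1 : ℝ) < N / 2 := by linarith
    have hhalf2 : N / 2 < N - 1 := by linarith
    have hmono : MonotoneOn (fun l : ℝ => l * M / (l * M + (N - 1 - l) * m)
        - (l - 1) * m / ((l - 1) * m + (N - l) * M)) (Set.Icc (1 : ℝ) (N / 2)) := by
      apply monotoneOn_of_deriv_nonneg (convex_Icc _ _)
        (hcont.mono (Set.Icc_subset_Icc le_rfl hhalf2.le))
      · rw [interior_Icc]
        intro x hx
        exact ((hder x ⟨hx.1.le, by linarith [hx.2]⟩).differentiableAt).differentiableWithinAt
      · rw [interior_Icc]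
        intro x hx
        have hx' : x ∈ Set.Icc (1 : ℝ) (N - 1) := ⟨hx.1.le, by linarith [hx.2]⟩
        rw [(hder x hx').deriv]
        have h1 := hD1pos x hx'
        have h2 := hD2pos x hx'
        have hle : x * M + (N - 1 - x) * m ≤ (x - 1) * m + (N - x) * M := by
          nlinarith [hx.2]
        have : (N - 1) * m * M / ((x - 1) * m + (N - x) * M) ^ 2
            ≤ (N - 1) * m * M / (x * M + (N - 1 - x) * m) ^ 2 := by
          gcongr
        linarith
    have hanti : AntitoneOn (fun l : ℝ => l * M / (l * M + (N - 1 - l) * m)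
        - (l - 1) * m / ((l - 1) * m + (N - l) * M)) (Set.Icc (N / 2) (N - 1)) := by
      apply antitoneOn_of_deriv_nonpos (convex_Icc _ _)
        (hcont.mono (Set.Icc_subset_Icc hhalf1.le le_rfl))
      · rw [interior_Icc]
        intro x hx
        exact ((hder x ⟨by linarith [hx.1], hx.2.le⟩).differentiableAt).differentiableWithinAt
      · rw [interior_Icc]
        intro x hx
        have hx' : x ∈ Set.Icc (1 : ℝ) (N - 1) := ⟨by linarith [hx.1], hx.2.le⟩
        rw [(hder x hx').deriv]
        have h1 := hD1pos x hx'
        have h2 := hD2pos x hx'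
        have hle : (x - 1) * m + (N - x) * M ≤ x * M + (N - 1 - x) * m := by
          nlinarith [hx.1]
        have : (N - 1) * m * M / (x * M + (N - 1 - x) * m) ^ 2
            ≤ (N - 1) * m * M / ((x - 1) * m + (N - x) * M) ^ 2 := by
          gcongr
        linarith
    intro x hx
    simp only [Set.mem_setOf_eq]
    rcases le_total x (N / 2) with h | h
    · exact hmono ⟨hx.1, h⟩ ⟨hhalf1.le, le_rfl⟩ h
    · exact hanti ⟨le_rfl, hhalf2.le⟩ ⟨h, hx.2⟩ h
  · have hD : 0 < N / 2 * M + (N - 1 - N / 2) * m :=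
      hD1pos (N / 2) ⟨by linarith, by linarith⟩
    have hD' : 0 < (N / 2 - 1) * m + (N - N / 2) * M :=
      hD2pos (N / 2) ⟨by linarith, by linarith⟩
    have hDen : 0 < N * M + (N - 2) * m := by
      have a1 : 0 < N * M := mul_pos (by linarith) hM
      have a2 : 0 ≤ (N - 2) * m := mul_nonneg (by linarith) hm.le
      linarith
    exact stmt_10_value N m M hD.ne' hD'.ne' hDen.ne'
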